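/- For every w ∈ S_n and 1≤i<n, the left Demazure operator satisfies ϖ_i 𝔊_w(x,t) = 𝔊_{s_i w}(x,t) if ℓ(s_i w)<ℓ(w), and ϖ_i 𝔊_w(x,t) = −β·𝔊_w(x,t) if ℓ(s_i w)>ℓ(w). -/

import Mathlib

open MvPolynomial

noncomputable section

namespace BPDPuzzle

/-- `x ⊖ y = (x - y)/(1 + β·y)`. -/
def ominus {K : Type*} [Field K] (β a b : K) : K := (a - b) / (1 + β * b)

/-- A permutation of `ℕ` lying in `S_∞`, i.e. fixing all sufficiently large integers. -/
def FinPerm (w : Equiv.Perm ℕ) : Prop := ∃ N : ℕ, ∀ j, N ≤ j → w j = j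

/-- A permutation of `ℕ` lying in `S_n` (0-based positions `0, …, n-1`). -/
def InSn (n : ℕ) (w : Equiv.Perm ℕ) : Prop := ∀ j, n ≤ j → w j = j

/-- Coxeter length: the number of inversions. -/
def len (w : Equiv.Perm ℕ) : ℕ := Set.ncard {p : ℕ × ℕ | p.1 < p.2 ∧ w p.2 < w p.1}

/-- The simple transposition `s_i`, exchanging the (0-based) positions `i` and `i+1`. -/
def sTr (i : ℕ) : Equiv.Perm ℕ := Equiv.swap i (i + 1)

/-- `u` and `v` have separated descents at position `k`, i.e.
`maxdes(u) ≤ k ≤ mindes(v)` (in 0-based conventions: `u` has no descent at any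
0-based position `≥ k` and `v` has no descent at any 0-based position `< k-1`). -/
def SepDesc (k : ℕ) (u v : Equiv.Perm ℕ) : Prop :=
  (∀ i, k ≤ i → u i ≤ u (i + 1)) ∧ (∀ i, i + 1 < k → v i ≤ v (i + 1))

/-- The longest element `n ⋯ 2 1` of `S_n`, extended by the identity. -/
def revPerm (n : ℕ) : Equiv.Perm ℕ where
  toFun j := if j < n then n - 1 - j else j
  invFun j := if j < n then n - 1 - j else j
  left_inv j := by dsimp only; split_ifs <;> omega
  right_inv j := by dsimp only; split_ifs <;> omega

/-- Exchange the values of a valuation at the indices `i` and `i+1`. -/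
def swapVal {K : Type*} (t : ℕ → K) (i : ℕ) : ℕ → K :=
  fun j => if j = i then t (i + 1) else if j = i + 1 then t i else t j

/-- The defining properties of the family of double Grothendieck polynomials
`𝔊_w(x, t)`, viewed as a family of polynomials in the `x`-variables depending on
a valuation `t` of the second set of variables:  the initial condition
`𝔊_{n⋯21}(x,t) = ∏_{i+j≤n} (x_i ⊖ t_j)` together with the Demazure recursion
`π_i 𝔊_w = 𝔊_{w s_i}` whenever `w(i) > w(i+1)` (the latter written with the
denominator `x_i - x_{i+1}` cleared). -/
def GrothFamily {K : Type*} [Field K] (β : K)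
    (G : (ℕ → K) → Equiv.Perm ℕ → MvPolynomial ℕ K) : Prop :=
  ∀ t : ℕ → K, (∀ j, 1 + β * t j ≠ 0) →
    (∀ n : ℕ, G t (revPerm n) =
      ∏ i ∈ Finset.range n, ∏ j ∈ Finset.range (n - 1 - i),
        C ((1 + β * t j)⁻¹) * (X i - C (t j))) ∧
    (∀ (w : Equiv.Perm ℕ) (i : ℕ), w (i + 1) < w i →
      (X i - X (i + 1)) * G t (w * sTr i) =
        (1 + C β * X (i + 1)) * G t w
          - (1 + C β * X i) * rename ⇑(Equiv.swap i (i + 1)) (G t w))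

/-- The defining property of the structure constants `c_{u,v}^w(t,y)`:
`𝔊_u(x,y) · 𝔊_v(x,t) = Σ_w c_{u,v}^w(t,y) · 𝔊_w(x,t)`, the (finitely supported)
sum ranging over the permutations `w ∈ S_∞`. -/
def StructConsts {K : Type*} [Field K] (β : K)
    (G : (ℕ → K) → Equiv.Perm ℕ → MvPolynomial ℕ K)
    (c : (ℕ → K) → (ℕ → K) → Equiv.Perm ℕ → Equiv.Perm ℕ → Equiv.Perm ℕ → K) : Prop :=
  ∀ t y : ℕ → K, (∀ j, 1 + β * t j ≠ 0) → (∀ j, 1 + β * y j ≠ 0) →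
    ∀ u v : Equiv.Perm ℕ, FinPerm u → FinPerm v →
      {w : Equiv.Perm ℕ | c t y u v w ≠ 0}.Finite ∧
      (∀ w, ¬ FinPerm w → c t y u v w = 0) ∧
      G y u * G t v = ∑ᶠ w : Equiv.Perm ℕ, C (c t y u v w) * G t w

/-! ### The lattice model / pipe puzzles -/

/-- A state of the `n × n` lattice model: labels in `{0, …, n}` on all horizontal
and vertical (half-)edges.  `sst.1 i j` is the `j`-th horizontal (half-)edge of row
`i` (`j = 0` being the left boundary and `j = n` the right boundary), and
`sst.2 i j` is the `i`-th vertical (half-)edge of column `j` (`i = 0` the top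
boundary, `i = n` the bottom boundary). -/
abbrev GridState (n : ℕ) : Type :=
  (Fin n → Fin (n + 1) → Fin (n + 1)) × (Fin (n + 1) → Fin n → Fin (n + 1))

/-- The label on the north edge of the tile in row `i`, column `j`. -/
def labN {n : ℕ} (sst : GridState n) (i j : Fin n) : ℕ := (sst.2 i.castSucc j : ℕ)
/-- The label on the east edge of the tile in row `i`, column `j`. -/
def labE {n : ℕ} (sst : GridState n) (i j : Fin n) : ℕ := (sst.1 i j.succ : ℕ)
/-- The label on the west edge of the tile in row `i`, column `j`. -/
def labW {n : ℕ} (sst : GridState n) (i j : Fin n) : ℕ := (sst.1 i j.castSucc : ℕ)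
/-- The label on the south edge of the tile in row `i`, column `j`. -/
def labS {n : ℕ} (sst : GridState n) (i j : Fin n) : ℕ := (sst.2 i.succ j : ℕ)

/-- Boundary label `κ_u` on the right side (0-based row `i`, 1-based pipe labels). -/
def kappaLab (k : ℕ) (u : Equiv.Perm ℕ) (i : ℕ) : ℕ :=
  if u⁻¹ i < k then u⁻¹ i + 1 else 0

/-- Boundary label `θ_v` on the top side (0-based column `j`, 1-based pipe labels). -/
def thetaLab (k : ℕ) (v : Equiv.Perm ℕ) (j : ℕ) : ℕ :=
  if k ≤ v⁻¹ j then v⁻¹ j + 1 else 0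

/-- Boundary label `η_w` on the bottom side (0-based column `j`, 1-based pipe labels). -/
def etaLab (w : Equiv.Perm ℕ) (j : ℕ) : ℕ := w⁻¹ j + 1

/-- The boundary condition for pipe puzzles for `(u, v, w)`: left edges all `0`,
right edges `κ_u`, top edges `θ_v`, bottom edges `η_w`. -/
def BoundaryCond (n k : ℕ) (u v w : Equiv.Perm ℕ) (sst : GridState n) : Prop :=
  (∀ i : Fin n, (sst.1 i 0 : ℕ) = 0) ∧
  (∀ i : Fin n, (sst.1 i (Fin.last n) : ℕ) = kappaLab k u (i : ℕ)) ∧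
  (∀ j : Fin n, (sst.2 0 j : ℕ) = thetaLab k v (j : ℕ)) ∧
  (∀ j : Fin n, (sst.2 (Fin.last n) j : ℕ) = etaLab w (j : ℕ))

/-- The admissible local configurations (tiles) of a pipe puzzle, in terms of the
four edge labels `N, E, W, S` around a tile:  the empty tile, the vertical pipe,
the horizontal pipe, the crossing (with the horizontal pipe carrying the smaller
label), the two elbows `⌟` and `⌐` (labels `≤ k` coming from the right side,
labels `> k` from the top side), and the bumping tiles (with the stated label
restrictions). -/
def LAdm (k N E W S : ℕ) : Prop :=
  (N = 0 ∧ E = 0 ∧ W = 0 ∧ S = 0) ∨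
  (E = 0 ∧ W = 0 ∧ 0 < N ∧ N = S) ∨
  (N = 0 ∧ S = 0 ∧ 0 < E ∧ E = W) ∨
  (0 < E ∧ E = W ∧ E < N ∧ N = S) ∨
  (E = 0 ∧ S = 0 ∧ 0 < N ∧ N = W ∧ N ≤ k) ∨
  (E = 0 ∧ S = 0 ∧ N = W ∧ k < N) ∨
  (N = 0 ∧ W = 0 ∧ 0 < E ∧ E = S ∧ E ≤ k) ∨
  (N = 0 ∧ W = 0 ∧ E = S ∧ k < E) ∨
  (0 < E ∧ E = S ∧ E < N ∧ N = W ∧ N ≤ k) ∨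
  (k < E ∧ E = S ∧ E < N ∧ N = W) ∨
  (0 < N ∧ N = W ∧ N ≤ k ∧ E = S ∧ k < E)

/-- The admissible local configurations of a Schubert pipe puzzle (no bumping
tiles; crossings have the horizontal pipe carrying the smaller label). -/
def LAdm0 (N E W S : ℕ) : Prop :=
  (N = 0 ∧ E = 0 ∧ W = 0 ∧ S = 0) ∨
  (E = 0 ∧ W = 0 ∧ 0 < N ∧ N = S) ∨
  (N = 0 ∧ S = 0 ∧ 0 < E ∧ E = W) ∨
  (0 < E ∧ E = W ∧ E < N ∧ N = S) ∨
  (E = 0 ∧ S = 0 ∧ 0 < N ∧ N = W) ∨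
  (N = 0 ∧ W = 0 ∧ 0 < E ∧ E = S)

/-- The vertex weight `L(x; N, E, W, S)` of the lattice model (equivalently, the
weight of the corresponding pipe-puzzle tile), with spectral parameter `x`. -/
def Lwt {K : Type*} [Field K] (β : K) (k : ℕ) (x : K) (N E W S : ℕ) : K :=
  if N = 0 ∧ E = 0 ∧ W = 0 ∧ S = 0 then x
  else if E = 0 ∧ W = 0 ∧ 0 < N ∧ N = S then 1
  else if N = 0 ∧ S = 0 ∧ 0 < E ∧ E = W then 1
  else if 0 < E ∧ E = W ∧ E < N ∧ N = S then 1
  else if E = 0 ∧ S = 0 ∧ 0 < N ∧ N = W ∧ N ≤ k then 1 + β * x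
  else if E = 0 ∧ S = 0 ∧ N = W ∧ k < N then 1
  else if N = 0 ∧ W = 0 ∧ 0 < E ∧ E = S ∧ E ≤ k then 1
  else if N = 0 ∧ W = 0 ∧ E = S ∧ k < E then 1 + β * x
  else if 0 < E ∧ E = S ∧ E < N ∧ N = W ∧ N ≤ k then β
  else if k < E ∧ E = S ∧ E < N ∧ N = W then β
  else if 0 < N ∧ N = W ∧ N ≤ k ∧ E = S ∧ k < E then β * (1 + β * x)
  else 0

/-- The set of pipe puzzles for `(u, v, w)` (with separated-descent parameter `k`),
encoded as admissible states of the lattice model. -/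
def PP (n k : ℕ) (u v w : Equiv.Perm ℕ) : Set (GridState n) :=
  {sst | BoundaryCond n k u v w sst ∧
    ∀ i j : Fin n, LAdm k (labN sst i j) (labE sst i j) (labW sst i j) (labS sst i j)}

/-- The set of Schubert pipe puzzles for `(u, v, w)`. -/
def PP0 (n k : ℕ) (u v w : Equiv.Perm ℕ) : Set (GridState n) :=
  {sst | BoundaryCond n k u v w sst ∧
    ∀ i j : Fin n, LAdm0 (labN sst i j) (labE sst i j) (labW sst i j) (labS sst i j)}

/-- The weight `wt(π)` of a pipe puzzle: the product over all tiles, the tile in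
row `i` and column `j` having spectral parameter `t_j ⊖ y_i`. -/
def stateWt {K : Type*} [Field K] (β : K) (k : ℕ) (t y : ℕ → K) {n : ℕ}
    (sst : GridState n) : K :=
  ∏ i : Fin n, ∏ j : Fin n,
    Lwt β k (ominus β (t (j : ℕ)) (y (i : ℕ)))
      (labN sst i j) (labE sst i j) (labW sst i j) (labS sst i j)

/-- The Schubert weight `wt₀(π)`: the product of `t_j - y_i` over the positions
`(i, j)` of the empty tiles. -/
def stateWt0 {K : Type*} [Field K] (t y : ℕ → K) {n : ℕ} (sst : GridState n) : K :=
  ∏ i : Fin n, ∏ j : Fin n,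
    if labN sst i j = 0 ∧ labE sst i j = 0 ∧ labW sst i j = 0 ∧ labS sst i j = 0
    then t (j : ℕ) - y (i : ℕ) else 1

set_option linter.unusedSectionVars false

lemma sTr_apply (i j : ℕ) : sTr i j = if j = i then i + 1 else if j = i + 1 then i else j := by
  simp [sTr, Equiv.swap_apply_def]

lemma sTr_mul_self (i : ℕ) : sTr i * sTr i = 1 := Equiv.swap_mul_self _ _

lemma sTr_inv (i : ℕ) : (sTr i)⁻¹ = sTr i := Equiv.swap_inv _ _

lemma perm_apply_inv_self (u : Equiv.Perm ℕ) (x : ℕ) : u (u⁻¹ x) = x := u.apply_symm_apply x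

lemma perm_inv_apply_self (u : Equiv.Perm ℕ) (x : ℕ) : u⁻¹ (u x) = x := u.symm_apply_apply x

lemma InSn.lt {n : ℕ} {u : Equiv.Perm ℕ} (hu : InSn n u) {j : ℕ} (hj : j < n) : u j < n := by
  by_contra h
  have h2 : u (u j) = u j := hu _ (le_of_not_gt h)
  have := u.injective h2
  omega

lemma InSn.inv {n : ℕ} {u : Equiv.Perm ℕ} (hu : InSn n u) : InSn n u⁻¹ := by
  intro j hj
  have := hu j hj
  conv_lhs => rw [← this]
  exact perm_inv_apply_self u j

lemma InSn.sTr {n j : ℕ} (hj : j + 1 < n) : InSn n (sTr j) := by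
  intro a ha; rw [sTr_apply]; split_ifs <;> omega

lemma sTr_lt {n j a : ℕ} (hj : j + 1 < n) (ha : a < n) : sTr j a < n := by
  rw [sTr_apply]; split_ifs <;> omega

lemma sTr_sTr (j a : ℕ) : sTr j (sTr j a) = a := Equiv.swap_apply_self _ _ _

lemma InSn.mul {n : ℕ} {u v : Equiv.Perm ℕ} (hu : InSn n u) (hv : InSn n v) :
    InSn n (u * v) := by
  intro j hj
  simp only [Equiv.Perm.mul_apply]
  rw [hv j hj, hu j hj]

/-- Inversions as a Finset. -/
def lenFin (n : ℕ) (u : Equiv.Perm ℕ) : ℕ :=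
  ((Finset.range n ×ˢ Finset.range n).filter fun p => p.1 < p.2 ∧ u p.2 < u p.1).card

lemma len_eq_lenFin {n : ℕ} {u : Equiv.Perm ℕ} (hu : InSn n u) : len u = lenFin n u := by
  have hset : {p : ℕ × ℕ | p.1 < p.2 ∧ u p.2 < u p.1} =
      ↑((Finset.range n ×ˢ Finset.range n).filter fun p => p.1 < p.2 ∧ u p.2 < u p.1) := by
    ext ⟨a, b⟩
    simp only [Set.mem_setOf_eq, Finset.coe_filter, Finset.mem_product, Finset.mem_range]
    constructor
    · rintro ⟨h1, h2⟩
      refine ⟨⟨?_, ?_⟩, h1, h2⟩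
      · by_contra h; push_neg at h
        have hb := hu a h
        have : n ≤ b := by omega
        have := hu b this
        omega
      · by_contra h; push_neg at h
        have hb := hu b h
        by_cases ha : a < n
        · have := hu.lt ha; omega
        · push_neg at ha; have := hu a ha; omega
    · rintro ⟨_, h⟩; exact h
  rw [len, hset, Set.ncard_coe_finset, lenFin]

lemma len_le {n : ℕ} {u : Equiv.Perm ℕ} (hu : InSn n u) : len u ≤ n * n := by
  rw [len_eq_lenFin hu]
  calc lenFin n u ≤ (Finset.range n ×ˢ Finset.range n).card := Finset.card_filter_le _ _
    _ = n * n := by simp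

lemma ord_sTr {j a b : ℕ} (hab : a < b) (hne : ¬(a = j ∧ b = j + 1)) :
    sTr j a < sTr j b := by
  rw [sTr_apply, sTr_apply]
  split_ifs <;> omega

lemma len_mul_sTr_ascent {n : ℕ} {u : Equiv.Perm ℕ} (hu : InSn n u) {j : ℕ}
    (hj : j + 1 < n) (h : u j < u (j + 1)) : len (u * sTr j) = len u + 1 := by
  have hus : InSn n (u * sTr j) := hu.mul (InSn.sTr hj)
  rw [len_eq_lenFin hus, len_eq_lenFin hu, lenFin, lenFin]
  have e1 : sTr j (j + 1) = j := Equiv.swap_apply_right _ _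
  have e2 : sTr j j = j + 1 := Equiv.swap_apply_left _ _
  have himg : ((Finset.range n ×ˢ Finset.range n).filter
      fun p => p.1 < p.2 ∧ (u * sTr j) p.2 < (u * sTr j) p.1) =
      insert (j, j + 1) (((Finset.range n ×ˢ Finset.range n).filter
        fun p => p.1 < p.2 ∧ u p.2 < u p.1).image fun p => (sTr j p.1, sTr j p.2)) := by
    ext ⟨a, b⟩
    simp only [Finset.mem_insert, Finset.mem_image, Finset.mem_filter, Finset.mem_product,
      Finset.mem_range, Prod.mk.injEq, Prod.exists]
    simp only [Equiv.Perm.mul_apply]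
    constructor
    · rintro ⟨⟨ha, hb⟩, hab, hinv⟩
      by_cases hcase : a = j ∧ b = j + 1
      · exact Or.inl ⟨hcase.1, hcase.2⟩
      · right
        refine ⟨sTr j a, sTr j b, ⟨⟨sTr_lt hj ha, sTr_lt hj hb⟩, ord_sTr hab hcase, ?_⟩,
          sTr_sTr j a, sTr_sTr j b⟩
        exact hinv
    · rintro (⟨rfl, rfl⟩ | ⟨a', b', ⟨⟨ha', hb'⟩, hab', hinv'⟩, rfl, rfl⟩)
      · rw [e1, e2]
        exact ⟨⟨by omega, hj⟩, by omega, h⟩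
      · have hne : ¬(a' = j ∧ b' = j + 1) := by rintro ⟨rfl, rfl⟩; omega
        rw [sTr_sTr, sTr_sTr]
        exact ⟨⟨sTr_lt hj ha', sTr_lt hj hb'⟩, ord_sTr hab' hne, hinv'⟩
  rw [himg, Finset.card_insert_of_notMem, Finset.card_image_of_injOn]
  · intro p _ q _ hpq
    rw [Prod.ext_iff] at hpq ⊢
    obtain ⟨hpq1, hpq2⟩ := hpq
    exact ⟨(sTr j).injective hpq1, (sTr j).injective hpq2⟩
  · simp only [Finset.mem_image, Finset.mem_filter, Prod.mk.injEq, not_exists]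
    rintro ⟨a, b⟩ ⟨⟨-, hab, -⟩, h1, h2⟩
    have ha : a = j + 1 := by rw [← sTr_sTr j a, h1, e2]
    have hb : b = j := by rw [← sTr_sTr j b, h2, e1]
    omega

lemma len_mul_sTr_descent {n : ℕ} {u : Equiv.Perm ℕ} (hu : InSn n u) {j : ℕ}
    (hj : j + 1 < n) (h : u (j + 1) < u j) : len u = len (u * sTr j) + 1 := by
  have e1 : sTr j (j + 1) = j := Equiv.swap_apply_right _ _
  have e2 : sTr j j = j + 1 := Equiv.swap_apply_left _ _
  have h' : (u * sTr j) j < (u * sTr j) (j + 1) := by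
    simp only [Equiv.Perm.mul_apply, e1, e2]; exact h
  have := len_mul_sTr_ascent (hu.mul (InSn.sTr hj)) hj h'
  rwa [mul_assoc, sTr_mul_self, mul_one] at this

lemma len_inv {n : ℕ} {u : Equiv.Perm ℕ} (hu : InSn n u) : len u⁻¹ = len u := by
  rw [len_eq_lenFin hu.inv, len_eq_lenFin hu, lenFin, lenFin]
  have himg : ((Finset.range n ×ˢ Finset.range n).filter
      fun p => p.1 < p.2 ∧ u⁻¹ p.2 < u⁻¹ p.1) =
      ((Finset.range n ×ˢ Finset.range n).filter
        fun p => p.1 < p.2 ∧ u p.2 < u p.1).image fun p => (u p.2, u p.1) := by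
    ext ⟨a, b⟩
    simp only [Finset.mem_image, Finset.mem_filter, Finset.mem_product, Finset.mem_range,
      Prod.mk.injEq, Prod.exists]
    constructor
    · rintro ⟨⟨ha, hb⟩, hab, hinv⟩
      refine ⟨u⁻¹ b, u⁻¹ a, ⟨⟨hu.inv.lt hb, hu.inv.lt ha⟩, hinv, ?_⟩,
        perm_apply_inv_self u a, perm_apply_inv_self u b⟩
      rw [perm_apply_inv_self, perm_apply_inv_self]; exact hab
    · rintro ⟨a', b', ⟨⟨ha', hb'⟩, hab', hinv'⟩, rfl, rfl⟩
      rw [perm_inv_apply_self, perm_inv_apply_self]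
      exact ⟨⟨hu.lt hb', hu.lt ha'⟩, hinv', hab'⟩
  rw [himg, Finset.card_image_of_injOn]
  intro p _ q _ hpq
  rw [Prod.ext_iff] at hpq ⊢
  obtain ⟨h1, h2⟩ := hpq
  exact ⟨u.injective h2, u.injective h1⟩

lemma len_sTr_mul_ascent {n : ℕ} {u : Equiv.Perm ℕ} (hu : InSn n u) {i : ℕ}
    (hi : i + 1 < n) (h : u⁻¹ i < u⁻¹ (i + 1)) : len (sTr i * u) = len u + 1 := by
  have hsu : InSn n (sTr i * u) := (InSn.sTr hi).mul hu
  have hinv : (sTr i * u)⁻¹ = u⁻¹ * sTr i := by rw [mul_inv_rev, sTr_inv]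
  rw [← len_inv hsu, hinv, len_mul_sTr_ascent hu.inv hi h, len_inv hu]

lemma len_sTr_mul_descent {n : ℕ} {u : Equiv.Perm ℕ} (hu : InSn n u) {i : ℕ}
    (hi : i + 1 < n) (h : u⁻¹ (i + 1) < u⁻¹ i) : len u = len (sTr i * u) + 1 := by
  have hsu : InSn n (sTr i * u) := (InSn.sTr hi).mul hu
  have hinv : (sTr i * u)⁻¹ = u⁻¹ * sTr i := by rw [mul_inv_rev, sTr_inv]
  rw [← len_inv hsu, hinv, ← len_inv hu]
  exact len_mul_sTr_descent hu.inv hi h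

lemma revPerm_apply {n j : ℕ} (hj : j < n) : revPerm n j = n - 1 - j := by
  simp only [revPerm, Equiv.coe_fn_mk, if_pos hj]

lemma InSn.revPerm (n : ℕ) : InSn n (revPerm n) := by
  intro j hj
  simp only [BPDPuzzle.revPerm, Equiv.coe_fn_mk]
  rw [if_neg (by omega)]

lemma allDescent_eq_revPerm {n : ℕ} {u : Equiv.Perm ℕ} (hu : InSn n u)
    (h : ∀ j, j + 1 < n → u (j + 1) < u j) : u = revPerm n := by
  have hub : ∀ j, j < n → u j + j ≤ n - 1 := by
    intro j
    induction j with
    | zero => intro h0; have := hu.lt h0; omega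
    | succ k ih => intro hk; have h1 := h k hk; have h2 := ih (by omega); omega
  have hlb : ∀ d, d < n → d ≤ u (n - 1 - d) := by
    intro d
    induction d with
    | zero => intro _; omega
    | succ k ih =>
      intro hk
      have h1 : n - 1 - (k + 1) + 1 = n - 1 - k := by omega
      have h2 := h (n - 1 - (k + 1)) (by omega)
      rw [h1] at h2
      have h3 := ih (by omega)
      omega
  ext j
  show u j = revPerm n j
  by_cases hj : j < n
  · rw [revPerm_apply hj]
    have h1 := hub j hj
    have h2 := hlb (n - 1 - j) (by omega)
    have h3 : n - 1 - (n - 1 - j) = j := by omega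
    rw [h3] at h2
    omega
  · rw [hu j (by omega), InSn.revPerm n j (by omega)]

lemma exists_ascent {n : ℕ} {u : Equiv.Perm ℕ} (hu : InSn n u) (hne : u ≠ revPerm n) :
    ∃ j, j + 1 < n ∧ u j < u (j + 1) := by
  by_contra hc
  push_neg at hc
  apply hne
  apply allDescent_eq_revPerm hu
  intro j hj
  have h1 := hc j hj
  have h2 : u (j + 1) ≠ u j := fun he => by have := u.injective he; omega
  omega

-- ## algebra part

section Alg

variable {K : Type*} [Field K]

lemma swapVal_i (t : ℕ → K) (i : ℕ) : swapVal t i i = t (i + 1) := by simp [swapVal]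

lemma swapVal_i1 (t : ℕ → K) (i : ℕ) : swapVal t i (i + 1) = t i := by simp [swapVal]

lemma swapVal_ne (t : ℕ → K) {i j : ℕ} (h1 : j ≠ i) (h2 : j ≠ i + 1) :
    swapVal t i j = t j := by simp [swapVal, h1, h2]

lemma ht_swapVal {β : K} {t : ℕ → K} (ht : ∀ j, 1 + β * t j ≠ 0) (i : ℕ) :
    ∀ j, 1 + β * swapVal t i j ≠ 0 := by
  intro j
  unfold swapVal
  split_ifs <;> apply ht

lemma X_sub_X_ne {r s : ℕ} (h : r ≠ s) : (X r - X s : MvPolynomial ℕ K) ≠ 0 := by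
  intro hc
  have h2 : (X r : MvPolynomial ℕ K) = X s := by linear_combination hc
  exact h (X_injective h2)

/-- The swap `sTr i` on the left of `revPerm n` equals `sTr (n-2-i)` on the right. -/
lemma sTr_mul_revPerm {n i : ℕ} (hi : i + 1 < n) :
    sTr i * revPerm n = revPerm n * sTr (n - 2 - i) := by
  ext j
  have hrev : ∀ x, revPerm n x = if x < n then n - 1 - x else x := fun x => rfl
  simp only [Equiv.Perm.mul_apply, sTr_apply, hrev]
  split_ifs <;> omega

/-- One factor of the staircase product. -/
def Fct (β : K) (t : ℕ → K) (p : Σ _ : ℕ, ℕ) : MvPolynomial ℕ K :=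
  C ((1 + β * t p.2)⁻¹) * (X p.1 - C (t p.2))

/-- The staircase index set. -/
def Sg (n : ℕ) : Finset (Σ _ : ℕ, ℕ) :=
  (Finset.range n).sigma fun a => Finset.range (n - 1 - a)

lemma G_rev_eq {β : K} {G : (ℕ → K) → Equiv.Perm ℕ → MvPolynomial ℕ K}
    (hG : GrothFamily β G) {t : ℕ → K} (ht : ∀ j, 1 + β * t j ≠ 0) (n : ℕ) :
    G t (revPerm n) = ∏ p ∈ Sg n, Fct β t p := by
  rw [(hG t ht).1 n, Finset.prod_sigma']
  rfl

lemma mem_Sg {n : ℕ} {p : Σ _ : ℕ, ℕ} : p ∈ Sg n ↔ p.1 < n ∧ p.2 < n - 1 - p.1 := by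
  obtain ⟨a, b⟩ := p
  simp [Sg, Finset.mem_sigma]

lemma G_rev_factor {β : K} {G : (ℕ → K) → Equiv.Perm ℕ → MvPolynomial ℕ K}
    (hG : GrothFamily β G) {t : ℕ → K} (ht : ∀ j, 1 + β * t j ≠ 0) {n i : ℕ}
    (hi : i + 1 < n) :
    G t (revPerm n) = Fct β t ⟨n - 2 - i, i⟩ *
      ∏ p ∈ (Sg n).erase ⟨n - 2 - i, i⟩, Fct β t p := by
  rw [G_rev_eq hG ht n, Finset.mul_prod_erase]
  rw [mem_Sg]
  refine ⟨?_, ?_⟩ <;> · dsimp only; omega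

lemma sig_eq_iff {a b c d : ℕ} : (⟨a, b⟩ : Σ _ : ℕ, ℕ) = ⟨c, d⟩ ↔ a = c ∧ b = d := by
  constructor
  · intro h
    exact ⟨congrArg Sigma.fst h, congrArg (fun q : Σ _ : ℕ, ℕ => q.2) h⟩
  · rintro ⟨rfl, rfl⟩; rfl

lemma mem_erase_Sg {n r i : ℕ} {a b : ℕ} :
    (⟨a, b⟩ : Σ _ : ℕ, ℕ) ∈ (Sg n).erase ⟨r, i⟩ ↔
      ¬(a = r ∧ b = i) ∧ a < n ∧ b < n - 1 - a := by
  rw [Finset.mem_erase, mem_Sg, ne_eq, sig_eq_iff]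

lemma swapVal_comp (t : ℕ → K) (i j : ℕ) : swapVal t i j = t (sTr i j) := by
  rw [sTr_apply]
  unfold swapVal
  split_ifs <;> rfl

lemma P_tswap (β : K) (t : ℕ → K) {n i : ℕ} (hi : i + 1 < n) :
    ∏ p ∈ (Sg n).erase ⟨n - 2 - i, i⟩, Fct β (swapVal t i) p =
      ∏ p ∈ (Sg n).erase ⟨n - 2 - i, i⟩, Fct β t p := by
  have hr : n - 2 - i + 1 + i + 1 = n := by omega
  refine Finset.prod_nbij' (fun p => ⟨p.1, sTr i p.2⟩) (fun p => ⟨p.1, sTr i p.2⟩)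
    ?_ ?_ ?_ ?_ ?_
  · rintro ⟨a, b⟩ hp
    rw [mem_erase_Sg] at hp
    obtain ⟨hne, ha, hb⟩ := hp
    have h3 : b = i → a ≠ n - 2 - i := fun hb' ha' => hne ⟨ha', hb'⟩
    rw [mem_erase_Sg, sTr_apply]
    dsimp only at *
    split_ifs with h1 h2
    · exact ⟨by rintro ⟨-, h⟩; omega, by omega, by omega⟩
    · exact ⟨by rintro ⟨h, -⟩; omega, by omega, by omega⟩
    · exact ⟨by rintro ⟨h, h'⟩; exact hne ⟨h, h'⟩, by omega, by omega⟩
  · rintro ⟨a, b⟩ hp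
    rw [mem_erase_Sg] at hp
    obtain ⟨hne, ha, hb⟩ := hp
    have h3 : b = i → a ≠ n - 2 - i := fun hb' ha' => hne ⟨ha', hb'⟩
    rw [mem_erase_Sg, sTr_apply]
    dsimp only at *
    split_ifs with h1 h2
    · exact ⟨by rintro ⟨-, h⟩; omega, by omega, by omega⟩
    · exact ⟨by rintro ⟨h, -⟩; omega, by omega, by omega⟩
    · exact ⟨by rintro ⟨h, h'⟩; exact hne ⟨h, h'⟩, by omega, by omega⟩
  · rintro ⟨a, b⟩ _
    dsimp only
    rw [sTr_sTr]
  · rintro ⟨a, b⟩ _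
    dsimp only
    rw [sTr_sTr]
  · rintro ⟨a, b⟩ _
    simp only [Fct, swapVal_comp]

lemma P_xswap (β : K) (t : ℕ → K) {n i : ℕ} (hi : i + 1 < n) :
    rename (⇑(Equiv.swap (n - 2 - i) (n - 2 - i + 1)))
        (∏ p ∈ (Sg n).erase ⟨n - 2 - i, i⟩, Fct β t p) =
      ∏ p ∈ (Sg n).erase ⟨n - 2 - i, i⟩, Fct β t p := by
  rw [map_prod]
  have hr : n - 2 - i + 1 + i + 1 = n := by omega
  have hmem : ∀ p ∈ (Sg n).erase ⟨(n - 2 - i : ℕ), i⟩,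
      (⟨sTr (n - 2 - i) p.1, p.2⟩ : Σ _ : ℕ, ℕ) ∈ (Sg n).erase ⟨(n - 2 - i : ℕ), i⟩ := by
    rintro ⟨a, b⟩ hp
    rw [mem_erase_Sg] at hp
    obtain ⟨hne, ha, hb⟩ := hp
    have h3 : a = n - 2 - i → b ≠ i := fun ha' hb' => hne ⟨ha', hb'⟩
    rw [mem_erase_Sg, sTr_apply]
    dsimp only at *
    split_ifs with h1 h2
    · exact ⟨by rintro ⟨h, -⟩; omega, by omega, by omega⟩
    · exact ⟨by rintro ⟨-, h⟩; omega, by omega, by omega⟩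
    · exact ⟨by rintro ⟨h, h'⟩; exact hne ⟨h, h'⟩, by omega, by omega⟩
  refine Finset.prod_nbij' (fun p => ⟨sTr (n - 2 - i) p.1, p.2⟩)
    (fun p => ⟨sTr (n - 2 - i) p.1, p.2⟩) hmem hmem ?_ ?_ ?_
  · rintro ⟨a, b⟩ _
    dsimp only
    rw [sTr_sTr]
  · rintro ⟨a, b⟩ _
    dsimp only
    rw [sTr_sTr]
  · rintro ⟨a, b⟩ _
    simp only [Fct]
    rw [map_mul, rename_C, map_sub, rename_X, rename_C]
    rfl

lemma base_case {β : K} {G : (ℕ → K) → Equiv.Perm ℕ → MvPolynomial ℕ K}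
    (hG : GrothFamily β G) {n i : ℕ} (hi : i + 1 < n)
    {t : ℕ → K} (ht : ∀ j, 1 + β * t j ≠ 0) (htt : t i ≠ t (i + 1)) :
    C ((t i - t (i + 1))⁻¹) *
        (-(C (1 + β * t i) * G t (revPerm n) -
            C (1 + β * t (i + 1)) * G (swapVal t i) (revPerm n)))
      = G t (sTr i * revPerm n) := by
  set r := n - 2 - i with hr
  set P : MvPolynomial ℕ K := ∏ p ∈ (Sg n).erase ⟨r, i⟩, Fct β t p with hP
  have ht' := ht_swapVal ht i
  have hQ : G t (revPerm n) = C ((1 + β * t i)⁻¹) * (X r - C (t i)) * P := by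
    rw [G_rev_factor hG ht hi, ← hr, ← hP]
    dsimp only [Fct]
  have hQ' : G (swapVal t i) (revPerm n) =
      C ((1 + β * t (i + 1))⁻¹) * (X r - C (t (i + 1))) * P := by
    rw [G_rev_factor hG ht' hi, P_tswap β t hi]
    congr 1
    simp only [Fct, swapVal_i]
    rfl
  have hdesc : revPerm n (r + 1) < revPerm n r := by
    rw [revPerm_apply (by omega), revPerm_apply (by omega)]
    omega
  have hrec := (hG t ht).2 (revPerm n) r hdesc
  have hXr : rename (⇑(Equiv.swap r (r + 1))) (G t (revPerm n)) =
      C ((1 + β * t i)⁻¹) * (X (r + 1) - C (t i)) * P := by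
    rw [G_rev_factor hG ht hi, map_mul, P_xswap β t hi]
    congr 1
    simp only [Fct]
    rw [map_mul, rename_C, map_sub, rename_X, rename_C, Equiv.swap_apply_left]
  have hc' : (C ((1 + β * t i)⁻¹) * (1 + C β * C (t i)) : MvPolynomial ℕ K) = 1 := by
    rw [show ((1 : MvPolynomial ℕ K) + C β * C (t i)) = C (1 + β * t i) by
      rw [← C_mul, ← C_1 (R := K), ← C_add],
      ← C_mul, inv_mul_cancel₀ (ht i), C_1]
  have hGP : G t (revPerm n * sTr r) = P := by
    have hX : (X r - X (r + 1) : MvPolynomial ℕ K) ≠ 0 := X_sub_X_ne (by omega)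
    apply mul_left_cancel₀ hX
    rw [hrec, hXr, hQ]
    linear_combination ((X r - X (r + 1)) * P) * hc'
  rw [sTr_mul_revPerm hi, ← hr, hGP, hQ, hQ']
  have hα : (C (1 + β * t i) * C ((1 + β * t i)⁻¹) : MvPolynomial ℕ K) = 1 := by
    rw [← C_mul, mul_inv_cancel₀ (ht i), C_1]
  have hα' : (C (1 + β * t (i + 1)) * C ((1 + β * t (i + 1))⁻¹) : MvPolynomial ℕ K) = 1 := by
    rw [← C_mul, mul_inv_cancel₀ (ht (i + 1)), C_1]
  have hd1 : (C ((t i - t (i + 1))⁻¹) * (C (t i) - C (t (i + 1))) : MvPolynomial ℕ K) = 1 := by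
    rw [← C_sub, ← C_mul, inv_mul_cancel₀ (sub_ne_zero.mpr htt), C_1]
  linear_combination (-(C ((t i - t (i + 1))⁻¹)) * (X r - C (t i)) * P) * hα +
    (C ((t i - t (i + 1))⁻¹) * (X r - C (t (i + 1))) * P) * hα' + P * hd1

lemma base_both {β : K} {G : (ℕ → K) → Equiv.Perm ℕ → MvPolynomial ℕ K}
    (hG : GrothFamily β G) {n i : ℕ} (hi : i + 1 < n)
    {t : ℕ → K} (ht : ∀ j, 1 + β * t j ≠ 0) (htt : t i ≠ t (i + 1)) :
    (len (sTr i * revPerm n) < len (revPerm n) →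
      C ((t i - t (i + 1))⁻¹) *
          (-(C (1 + β * t i) * G t (revPerm n) -
              C (1 + β * t (i + 1)) * G (swapVal t i) (revPerm n)))
        = G t (sTr i * revPerm n)) ∧
    (len (revPerm n) < len (sTr i * revPerm n) →
      C ((t i - t (i + 1))⁻¹) *
          (-(C (1 + β * t i) * G t (revPerm n) -
              C (1 + β * t (i + 1)) * G (swapVal t i) (revPerm n)))
        = -(C β * G t (revPerm n))) := by
  have hdesc : revPerm n ((n - 2 - i) + 1) < revPerm n (n - 2 - i) := by
    rw [revPerm_apply (by omega), revPerm_apply (by omega)]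
    omega
  have hlen : len (revPerm n) = len (sTr i * revPerm n) + 1 := by
    rw [sTr_mul_revPerm hi]
    exact len_mul_sTr_descent (InSn.revPerm n) (by omega) hdesc
  exact ⟨fun _ => base_case hG hi ht htt, fun h => absurd h (by omega)⟩

lemma main_aux {β : K} {G : (ℕ → K) → Equiv.Perm ℕ → MvPolynomial ℕ K}
    (hG : GrothFamily β G) {n i : ℕ} (hi : i + 1 < n)
    {t : ℕ → K} (ht : ∀ j, 1 + β * t j ≠ 0) (htt : t i ≠ t (i + 1)) :
    ∀ k : ℕ, ∀ w : Equiv.Perm ℕ, InSn n w → n * n - len w ≤ k →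
      ((len (sTr i * w) < len w →
        C ((t i - t (i + 1))⁻¹) *
            (-(C (1 + β * t i) * G t w - C (1 + β * t (i + 1)) * G (swapVal t i) w))
          = G t (sTr i * w)) ∧
      (len w < len (sTr i * w) →
        C ((t i - t (i + 1))⁻¹) *
            (-(C (1 + β * t i) * G t w - C (1 + β * t (i + 1)) * G (swapVal t i) w))
          = -(C β * G t w))) := by
  have ht' := ht_swapVal ht i
  intro k
  induction k with
  | zero =>
    intro w hw hk
    by_cases hne : w = revPerm n
    · subst hne
      exact base_both hG hi ht htt
    · exfalso
      obtain ⟨j, hj, hasc⟩ := exists_ascent hw hne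
      have hw' : InSn n (w * sTr j) := hw.mul (InSn.sTr hj)
      have h1 := len_mul_sTr_ascent hw hj hasc
      have h2 := len_le hw'
      omega
  | succ k ih =>
    intro w hw hk
    by_cases hne : w = revPerm n
    · subst hne
      exact base_both hG hi ht htt
    · obtain ⟨j, hj, hasc⟩ := exists_ascent hw hne
      have hXne : (X j - X (j + 1) : MvPolynomial ℕ K) ≠ 0 := X_sub_X_ne (by omega)
      set w' := w * sTr j with hw'def
      have hw' : InSn n w' := hw.mul (InSn.sTr hj)
      have hlenw' : len w' = len w + 1 := len_mul_sTr_ascent hw hj hasc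
      have hkw' : n * n - len w' ≤ k := by
        have := len_le hw'
        omega
      have hdesc' : w' (j + 1) < w' j := by
        have e1 : w' j = w (j + 1) := by
          simp only [hw'def, Equiv.Perm.mul_apply]
          rw [show sTr j j = j + 1 from Equiv.swap_apply_left _ _]
        have e2 : w' (j + 1) = w j := by
          simp only [hw'def, Equiv.Perm.mul_apply]
          rw [show sTr j (j + 1) = j from Equiv.swap_apply_right _ _]
        omega
      have hww : w' * sTr j = w := by
        rw [hw'def, mul_assoc, sTr_mul_self, mul_one]
      have hrec := (hG t ht).2 w' j hdesc'
      have hrec' := (hG (swapVal t i) ht').2 w' j hdesc'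
      rw [hww] at hrec hrec'
      obtain ⟨IH1, IH2⟩ := ih w' hw' hkw'
      -- position of the values i and i+1 in w'
      rcases lt_trichotomy (w'⁻¹ i) (w'⁻¹ (i + 1)) with hpq | hpq | hpq
      · -- Case A : i is not a left descent of w'
        have hlen1 : len (sTr i * w') = len w' + 1 := len_sTr_mul_ascent hw' hi hpq
        have hE := IH2 (by omega)
        have SE := congrArg (⇑(rename (Equiv.swap j (j + 1) : ℕ ≃ ℕ) :
          MvPolynomial ℕ K →ₐ[K] MvPolynomial ℕ K)) hE
        simp only [map_mul, map_neg, map_sub, rename_C] at SE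
        -- w also has i not a left descent
        have hnp : ¬(w'⁻¹ i = j ∧ w'⁻¹ (i + 1) = j + 1) := by
          rintro ⟨h1, h2⟩
          have e1 : w' j = i := by rw [← h1]; exact perm_apply_inv_self w' i
          have e2 : w' (j + 1) = i + 1 := by rw [← h2]; exact perm_apply_inv_self w' (i + 1)
          omega
        have hwi : w'⁻¹ = sTr j * w⁻¹ := by rw [hw'def, mul_inv_rev, sTr_inv]
        have hwinv : ∀ m : ℕ, w⁻¹ m = sTr j (w'⁻¹ m) := by
          intro m
          rw [hwi, Equiv.Perm.mul_apply, sTr_sTr]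
        have hasc2 : w⁻¹ i < w⁻¹ (i + 1) := by
          rw [hwinv i, hwinv (i + 1)]
          exact ord_sTr hpq hnp
        have hlen2 : len (sTr i * w) = len w + 1 := len_sTr_mul_ascent hw hi hasc2
        constructor
        · intro h; exact absurd h (by omega)
        · intro _
          apply mul_left_cancel₀ hXne
          linear_combination (C β - C ((t i - t (i + 1))⁻¹) * C (1 + β * t i)) * hrec +
            (C ((t i - t (i + 1))⁻¹) * C (1 + β * t (i + 1))) * hrec' +
            (1 + C β * X (j + 1)) * hE - (1 + C β * X j) * SE
      · exfalso
        have hcc := congrArg w' hpq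
        rw [perm_apply_inv_self, perm_apply_inv_self] at hcc
        omega
      · -- Case B : i is a left descent of w'
        have hlenB : len w' = len (sTr i * w') + 1 := len_sTr_mul_descent hw' hi hpq
        have hE := IH1 (by omega)
        have SE := congrArg (⇑(rename (Equiv.swap j (j + 1) : ℕ ≃ ℕ) :
          MvPolynomial ℕ K →ₐ[K] MvPolynomial ℕ K)) hE
        simp only [map_mul, map_neg, map_sub, rename_C] at SE
        by_cases hB2 : w' j = i + 1 ∧ w' (j + 1) = i
        · -- Case B2 : s_i w' = w
          obtain ⟨hB2a, hB2b⟩ := hB2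
          have hwid : sTr i * w' = w := by
            rw [← hww]
            ext x
            simp only [Equiv.Perm.mul_apply]
            by_cases hx1 : x = j
            · rw [hx1, show sTr j j = j + 1 from Equiv.swap_apply_left _ _, hB2a, hB2b,
                show sTr i (i + 1) = i from Equiv.swap_apply_right _ _]
            · by_cases hx2 : x = j + 1
              · rw [hx2, show sTr j (j + 1) = j from Equiv.swap_apply_right _ _, hB2b, hB2a,
                  show sTr i i = i + 1 from Equiv.swap_apply_left _ _]
              · have hxx : sTr j x = x := by rw [sTr_apply, if_neg hx1, if_neg hx2]
                rw [hxx]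
                have hni : w' x ≠ i := by
                  intro hc
                  exact hx2 (w'.injective (by rw [hc, ← hB2b]))
                have hni1 : w' x ≠ i + 1 := by
                  intro hc
                  exact hx1 (w'.injective (by rw [hc, ← hB2a]))
                rw [sTr_apply, if_neg hni, if_neg hni1]
          rw [hwid] at hE SE
          have hsw : sTr i * w = w' := by
            rw [← hwid, ← mul_assoc, sTr_mul_self, one_mul]
          have hlen2 : len (sTr i * w) = len w + 1 := by rw [hsw]; omega
          -- symmetry of G t w in X j, X (j+1)
          have hSS : ∀ f : MvPolynomial ℕ K,
              rename ⇑(Equiv.swap j (j + 1)) (rename ⇑(Equiv.swap j (j + 1)) f) = f := by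
            intro f
            rw [rename_rename]
            have hid : (⇑(Equiv.swap j (j + 1)) ∘ ⇑(Equiv.swap j (j + 1))) = id := by
              funext x
              simp [Equiv.swap_apply_self]
            rw [hid, rename_id_apply]
          have hSrec := congrArg (⇑(rename (Equiv.swap j (j + 1) : ℕ ≃ ℕ) :
            MvPolynomial ℕ K →ₐ[K] MvPolynomial ℕ K)) hrec
          simp only [map_mul, map_sub, map_add, map_one, rename_X, rename_C,
            Equiv.swap_apply_left, Equiv.swap_apply_right] at hSrec
          rw [hSS] at hSrec
          have hsym : rename ⇑(Equiv.swap j (j + 1)) (G t w) = G t w := by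
            apply mul_left_cancel₀ hXne
            linear_combination (-1 : MvPolynomial ℕ K) * hSrec - hrec
          constructor
          · intro h; exact absurd h (by omega)
          · intro _
            apply mul_left_cancel₀ hXne
            linear_combination (- (C ((t i - t (i + 1))⁻¹) * C (1 + β * t i))) * hrec +
              (C ((t i - t (i + 1))⁻¹) * C (1 + β * t (i + 1))) * hrec' +
              (1 + C β * X (j + 1)) * hE - (1 + C β * X j) * SE -
              (1 + C β * X j) * hsym
        · -- Case B1 : s_i w' still has a descent at j
          have hdesc2 : (sTr i * w') (j + 1) < (sTr i * w') j := by
            simp only [Equiv.Perm.mul_apply]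
            rw [sTr_apply, sTr_apply]
            have hne1 : w' j ≠ w' (j + 1) := by omega
            split_ifs <;> omega
          have hsiw : InSn n (sTr i * w') := (InSn.sTr hi).mul hw'
          have hlenC := len_mul_sTr_descent hsiw hj hdesc2
          have hmm : sTr i * w' * sTr j = sTr i * w := by rw [mul_assoc, hww]
          rw [hmm] at hlenC
          have hrecA2 := (hG t ht).2 (sTr i * w') j hdesc2
          rw [hmm] at hrecA2
          constructor
          · intro _
            apply mul_left_cancel₀ hXne
            linear_combination (- (C ((t i - t (i + 1))⁻¹) * C (1 + β * t i))) * hrec +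
              (C ((t i - t (i + 1))⁻¹) * C (1 + β * t (i + 1))) * hrec' -
              hrecA2 + (1 + C β * X (j + 1)) * hE - (1 + C β * X j) * SE
          · intro h; exact absurd h (by omega)

end Alg

/-- Proposition `Prop:LDO` of the paper.  For every `w ∈ S_n`
and every simple transposition `s_i`, the left Demazure operator
`ϖ_i f = -((1+βt_i)f - (1+βt_{i+1})·f|_{t_i↔t_{i+1}})/(t_i - t_{i+1})`, acting on
the `t`-variables, satisfies `ϖ_i 𝔊_w(x,t) = 𝔊_{s_i w}(x,t)` if
`ℓ(s_i w) < ℓ(w)`, and `ϖ_i 𝔊_w(x,t) = -β·𝔊_w(x,t)` if `ℓ(s_i w) > ℓ(w)`. -/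
theorem left_demazure_on_grothendieck
    {K : Type*} [Field K] (β : K)
    (G : (ℕ → K) → Equiv.Perm ℕ → MvPolynomial ℕ K)
    (hG : GrothFamily β G)
    (n : ℕ) (w : Equiv.Perm ℕ) (hw : InSn n w)
    (i : ℕ) (hi : i + 1 < n)
    (t : ℕ → K) (ht : ∀ j, 1 + β * t j ≠ 0) (htt : t i ≠ t (i + 1)) :
    (len (sTr i * w) < len w →
      C ((t i - t (i + 1))⁻¹) *
          (-(C (1 + β * t i) * G t w - C (1 + β * t (i + 1)) * G (swapVal t i) w))
        = G t (sTr i * w)) ∧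
    (len w < len (sTr i * w) →
      C ((t i - t (i + 1))⁻¹) *
          (-(C (1 + β * t i) * G t w - C (1 + β * t (i + 1)) * G (swapVal t i) w))
        = -(C β * G t w)) := by
  exact main_aux hG hi ht htt (n * n - len w) w hw le_rfl
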